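/- The importance weight identity: for finite sample spaces, if T̃(X) and T(X) are the reverse and forward annealing processes built from distributions P_k(x) = exp(-E_k(x))/Z_k and transition kernels T_k satisfying the invariance condition P_k(x') = Σ_x T_k(x'|x) P_k(x), then T̃(X)/T(X) = (Z_0/Z_K) · Π_{k=1}^K exp(-E_k(x^{(k)}) + E_{k-1}(x^{(k)})) whenever T(X) > 0. -/

import Mathlib

/-- Importance weight identity.
States `x^{(1)},…,x^{(K)}` are encoded as `X : Fin (K+1) → S` (paper's K is `K+1` here),
energies `E k` for `k = 0,…,K+1` (paper's `0,…,K`). The forward process `Tfwd` and reverse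
process `Trev` are defined by the hypotheses, and the ratio `Trev / Tfwd` equals
`(Z 0 / Z_K) · ∏ exp(-E_k(x^{(k)}) + E_{k-1}(x^{(k)}))` whenever `Tfwd > 0`. -/
theorem stmt0 {S : Type*} [Fintype S] (K : ℕ)
    (E : Fin (K + 2) → S → ℝ)
    (Z : Fin (K + 2) → ℝ) (hZ : ∀ k, Z k = ∑ x : S, Real.exp (-(E k x)))
    (P : Fin (K + 2) → S → ℝ) (hP : ∀ k x, P k x = Real.exp (-(E k x)) / Z k)
    (T : Fin (K + 2) → S → S → ℝ)
    (hinv : ∀ k x', (∑ x : S, T k x' x * P k x) = P k x')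
    (X : Fin (K + 1) → S)
    (Tfwd Trev : ℝ)
    (hTfwd : Tfwd =
      (∏ i : Fin K, T i.succ.castSucc (X i.succ) (X i.castSucc)) * P 0 (X 0))
    (hTrev : Trev =
      (∏ i : Fin K, T i.succ.castSucc (X i.succ) (X i.castSucc) *
          P i.succ.castSucc (X i.castSucc) / P i.succ.castSucc (X i.succ)) *
        P (Fin.last (K + 1)) (X (Fin.last K)))
    (hpos : 0 < Tfwd) :
    Trev / Tfwd = (Z 0 / Z (Fin.last (K + 1))) *
      ∏ i : Fin (K + 1), Real.exp (-(E i.succ (X i)) + E i.castSucc (X i)) := by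
  have hZpos : ∀ k, 0 < Z k := by
    intro k
    have : Nonempty S := ⟨X 0⟩
    rw [hZ]
    exact Finset.sum_pos (fun x _ => Real.exp_pos _) Finset.univ_nonempty
  have hZne : ∀ k, Z k ≠ 0 := fun k => (hZpos k).ne'
  have hPpos : ∀ k x, 0 < P k x := fun k x => by
    rw [hP]; exact div_pos (Real.exp_pos _) (hZpos k)
  have hPne : ∀ k x, P k x ≠ 0 := fun k x => (hPpos k x).ne'
  have hAne : (∏ i : Fin K, T i.succ.castSucc (X i.succ) (X i.castSucc)) ≠ 0 := by
    intro h0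
    rw [hTfwd, h0, zero_mul] at hpos
    exact lt_irrefl 0 hpos
  have hnum : (∏ i : Fin K, P i.succ.castSucc (X i.castSucc)) *
      P (Fin.last (K + 1)) (X (Fin.last K)) = ∏ i : Fin (K + 1), P i.succ (X i) := by
    rw [Fin.prod_univ_castSucc (f := fun i : Fin (K + 1) => P i.succ (X i))]
    simp [Fin.succ_castSucc, Fin.succ_last, -Fin.castSucc_succ]
  have hden : P 0 (X 0) * (∏ i : Fin K, P i.succ.castSucc (X i.succ))
      = ∏ i : Fin (K + 1), P i.castSucc (X i) := by
    rw [Fin.prod_univ_succ (f := fun i : Fin (K + 1) => P i.castSucc (X i))]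
    simp [Fin.succ_castSucc, -Fin.castSucc_succ]
  have hDne : (∏ i : Fin K, P i.succ.castSucc (X i.succ)) ≠ 0 :=
    Finset.prod_ne_zero_iff.mpr fun i _ => hPne _ _
  have hg0ne : P 0 (X 0) ≠ 0 := hPne _ _
  have key : Trev / Tfwd = (∏ i : Fin (K + 1), P i.succ (X i)) /
      (∏ i : Fin (K + 1), P i.castSucc (X i)) := by
    rw [hTrev, hTfwd, Finset.prod_div_distrib, Finset.prod_mul_distrib, ← hnum, ← hden]
    field_simp
  have hf : ∏ i : Fin (K + 1), P i.succ (X i) =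
      (∏ i : Fin (K + 1), Real.exp (-(E i.succ (X i)))) / (∏ i : Fin (K + 1), Z i.succ) := by
    rw [← Finset.prod_div_distrib]
    exact Finset.prod_congr rfl fun i _ => hP _ _
  have hg : ∏ i : Fin (K + 1), P i.castSucc (X i) =
      (∏ i : Fin (K + 1), Real.exp (-(E i.castSucc (X i)))) /
        (∏ i : Fin (K + 1), Z i.castSucc) := by
    rw [← Finset.prod_div_distrib]
    exact Finset.prod_congr rfl fun i _ => hP _ _
  have hZtel : (∏ i : Fin (K + 1), Z i.castSucc) * Z (Fin.last (K + 1)) =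
      Z 0 * ∏ i : Fin (K + 1), Z i.succ := by
    rw [← Fin.prod_univ_castSucc, ← Fin.prod_univ_succ]
  have hZsne : (∏ i : Fin (K + 1), Z i.succ) ≠ 0 :=
    Finset.prod_ne_zero_iff.mpr fun i _ => hZne _
  have hZratio : (∏ i : Fin (K + 1), Z i.castSucc) / (∏ i : Fin (K + 1), Z i.succ) =
      Z 0 / Z (Fin.last (K + 1)) := by
    rw [div_eq_div_iff hZsne (hZne _)]
    exact hZtel
  have hexp : ∏ i : Fin (K + 1), Real.exp (-(E i.succ (X i)) + E i.castSucc (X i)) =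
      (∏ i : Fin (K + 1), Real.exp (-(E i.succ (X i)))) /
        (∏ i : Fin (K + 1), Real.exp (-(E i.castSucc (X i)))) := by
    rw [← Finset.prod_div_distrib]
    exact Finset.prod_congr rfl fun i _ => by rw [← Real.exp_sub]; congr 1; ring
  rw [key, hf, hg, hexp, div_div_div_comm, div_div_eq_mul_div, mul_div_assoc, hZratio,
    mul_comm]
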